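/- Let G be a nontrivial abelian metrizable group, X a G-Tychonoff first countable space, and H a subgroup of G^X (with the pointwise topology) containing B_1(X,G). Then H is κ-Fréchet–Urysohn. -/

import Mathlib

open Filter Topology

/-- A topological space is κ-Fréchet–Urysohn if for every open set `U` and every point
`x` in the closure of `U` there is a sequence in `U` converging to `x`. -/
def KappaFrechetUrysohn (X : Type*) [TopologicalSpace X] : Prop :=
  ∀ U : Set X, IsOpen U → ∀ x ∈ closure U,
    ∃ u : ℕ → X, (∀ n, u n ∈ U) ∧ Tendsto u atTop (𝓝 x)

/-- `X` is `G`-Tychonoff: every point outside a closed set can be completely separated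
from it by a continuous `G`-valued function taking prescribed (distinct) values. -/
def GTychonoff (X G : Type*) [TopologicalSpace X] [TopologicalSpace G] : Prop :=
  ∀ A : Set X, IsClosed A → ∀ x ∉ A, ∀ y z : G, y ≠ z →
    ∃ f : X → G, Continuous f ∧ f x = y ∧ ∀ a ∈ A, f a = z

/-- If `G` is a nontrivial abelian metrizable group, `X` a `G`-Tychonoff first countable
space, and `H` a subgroup of `G^X` containing `B₁(X, G)`, then `H` is κ-Fréchet–Urysohn. -/
theorem stmt14 {G X : Type*} [AddCommGroup G] [TopologicalSpace G] [IsTopologicalAddGroup G]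
    [TopologicalSpace.MetrizableSpace G] [Nontrivial G]
    [TopologicalSpace X] [T2Space X] [FirstCountableTopology X]
    (hXG : GTychonoff X G) (H : AddSubgroup (X → G))
    (hB1 : ∀ f : X → G,
      (∃ F : ℕ → X → G, (∀ n, Continuous (F n)) ∧
        ∀ x, Tendsto (fun n => F n x) atTop (𝓝 (f x))) → f ∈ H) :
    KappaFrechetUrysohn ↥H := by
  classical
  letI : MetricSpace G := TopologicalSpace.metrizableSpaceMetric G
  -- Step 1: every "single point" function belongs to H.
  have hsingle : ∀ (x₀ : X) (y : G), (fun x => if x = x₀ then y else 0) ∈ H := by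
    intro x₀ y
    by_cases hy : y = 0
    · subst hy
      have h0 : (fun x : X => if x = x₀ then (0 : G) else 0) = 0 := by
        funext x; simp
      rw [h0]; exact H.zero_mem
    · obtain ⟨b, hb⟩ := (𝓝 x₀).exists_antitone_basis
      have hmem : ∀ n, x₀ ∈ interior (b n) :=
        fun n => mem_interior_iff_mem_nhds.2 (hb.mem n)
      have hF : ∀ n : ℕ, ∃ f : X → G, Continuous f ∧ f x₀ = y ∧
          ∀ a ∈ (interior (b n))ᶜ, f a = 0 := by
        intro n
        exact hXG (interior (b n))ᶜ (isClosed_compl_iff.2 isOpen_interior) x₀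
          (by simpa using hmem n) y 0 hy
      choose f hfc hfx hf0 using hF
      apply hB1
      refine ⟨f, hfc, ?_⟩
      intro x
      by_cases hx : x = x₀
      · subst hx
        simp only [if_pos rfl]
        have : (fun n => f n x) = fun _ => y := by funext n; exact hfx n
        rw [this]; exact tendsto_const_nhds
      · simp only [if_neg hx]
        have hxc : ({x}ᶜ : Set X) ∈ 𝓝 x₀ :=
          (isOpen_compl_singleton).mem_nhds (by simp [Ne.symm hx])
        obtain ⟨N, -, hN⟩ := hb.1.mem_iff.1 hxc
        have hev : ∀ᶠ n in atTop, f n x = 0 := by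
          refine eventually_atTop.2 ⟨N, fun n hn => ?_⟩
          apply hf0 n
          intro hxin
          exact (hN (hb.2 hn (interior_subset hxin))) rfl
        exact Tendsto.congr' (hev.mono fun n h => h.symm) tendsto_const_nhds
  -- Step 2: the main argument.
  intro U hU h hclos
  obtain ⟨V, hVopen, hVU⟩ := isOpen_induced_iff.1 hU
  have hhV : (h : X → G) ∈ closure (Subtype.val '' U) := closure_subtype.1 hclos
  -- key approximation lemma
  have hkey : ∀ (F : Finset X) (n : ℕ), ∃ p : (X → G) × Finset X,
      p.1 ∈ H ∧ p.1 ∈ V ∧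
      (∀ x ∈ F, dist (p.1 x) ((h : X → G) x) < 1 / (n + 1)) ∧
      ∀ x, x ∉ p.2 → p.1 x = (h : X → G) x := by
    intro F n
    have hεpos : (0 : ℝ) < 1 / (n + 1) := by positivity
    set N : Set (X → G) :=
      (↑F : Set X).pi (fun x => Metric.ball ((h : X → G) x) (1 / (n + 1))) with hN
    have hNopen : IsOpen N := isOpen_set_pi F.finite_toSet fun i _ => Metric.isOpen_ball
    have hhN : (h : X → G) ∈ N := fun x _ => by simpa using hεpos
    obtain ⟨g₀, hg₀N, hg₀img⟩ := mem_closure_iff.1 hhV N hNopen hhN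
    obtain ⟨u₀, hu₀U, rfl⟩ := hg₀img
    have hg₀V : (u₀ : X → G) ∈ V := by rw [← hVU] at hu₀U; exact hu₀U
    obtain ⟨I, t, hIt, hsub⟩ :=
      isOpen_pi_iff.1 (hVopen.inter hNopen) (u₀ : X → G) ⟨hg₀V, hg₀N⟩
    set u : X → G := fun x => if x ∈ I then (u₀ : X → G) x else (h : X → G) x with hu
    have hupi : u ∈ (↑I : Set X).pi t := by
      intro i hi
      have hiI : i ∈ I := hi
      simp only [hu, if_pos hiI]
      exact (hIt i hiI).2
    have huVN : u ∈ V ∩ N := hsub hupi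
    have huH : u ∈ H := by
      have hsum : u = (h : X → G) +
          ∑ x ∈ I, (fun z => if z = x then (u₀ : X → G) x - (h : X → G) x else 0) := by
        funext z
        simp only [Pi.add_apply, Finset.sum_apply]
        rw [Finset.sum_ite_eq]
        by_cases hz : z ∈ I <;> simp [hu, hz]
      rw [hsum]
      exact H.add_mem h.2 (AddSubgroup.sum_mem H fun i _ => hsingle i _)
    refine ⟨(u, I), huH, huVN.1, ?_, ?_⟩
    · intro x hx
      have := huVN.2 x (by simpa using hx)
      simpa [Metric.mem_ball] using this
    · intro x hx
      simp [hu, hx]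
  choose p hp1 hp2 hp3 hp4 using hkey
  -- build the sequence by recursion
  let g : ℕ → (X → G) × Finset X := fun n =>
    Nat.rec ((h : X → G), (∅ : Finset X))
      (fun n q => ((p q.2 n).1, q.2 ∪ (p q.2 n).2)) n
  have hg : ∀ n, g (n + 1) = ((p (g n).2 n).1, (g n).2 ∪ (p (g n).2 n).2) :=
    fun n => rfl
  have hmonoF : Monotone fun n => (g n).2 := by
    apply monotone_nat_of_le_succ
    intro n
    rw [hg]
    exact Finset.subset_union_left
  have hgH : ∀ n, (g (n + 1)).1 ∈ H := by
    intro n; rw [hg]; exact hp1 _ _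
  have hgV : ∀ n, (g (n + 1)).1 ∈ V := by
    intro n; rw [hg]; exact hp2 _ _
  have hgdist : ∀ n, ∀ x ∈ (g n).2, dist ((g (n + 1)).1 x) ((h : X → G) x) < 1 / (n + 1) := by
    intro n; rw [hg]; exact hp3 _ _
  have hgconst : ∀ n x, x ∉ (g (n + 1)).2 → (g (n + 1)).1 x = (h : X → G) x := by
    intro n x hx
    rw [hg] at hx ⊢
    exact hp4 _ _ x (fun hmem => hx (Finset.mem_union_right _ hmem))
  refine ⟨fun n => ⟨(g (n + 1)).1, hgH n⟩, ?_, ?_⟩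
  · intro n
    rw [← hVU]
    exact hgV n
  · rw [tendsto_subtype_rng]
    rw [tendsto_pi_nhds]
    intro x
    rw [Metric.tendsto_atTop]
    intro ε hε
    by_cases hx : ∀ n, x ∉ (g n).2
    · refine ⟨0, fun n _ => ?_⟩
      show dist ((g (n + 1)).1 x) ((h : X → G) x) < ε
      rw [hgconst n x (hx (n + 1))]
      simpa [dist_self] using hε
    · push_neg at hx
      obtain ⟨k, hk⟩ := hx
      obtain ⟨M, hM⟩ := exists_nat_one_div_lt hε
      refine ⟨max k M, fun n hn => ?_⟩
      have hxn : x ∈ (g n).2 := hmonoF (le_trans (le_max_left k M) hn) hk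
      have h1 := hgdist n x hxn
      have h2 : (1 : ℝ) / (n + 1) ≤ 1 / (M + 1) := by
        apply one_div_le_one_div_of_le
        · positivity
        · have : (M : ℝ) ≤ n := by
            exact_mod_cast le_trans (le_max_right k M) hn
          linarith
      calc dist ((g (n + 1)).1 x) ((h : X → G) x) < 1 / (n + 1) := h1
        _ ≤ 1 / (M + 1) := h2
        _ < ε := hM
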